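/- Let X be a path-connected topological space, A ⊆ X a path-connected subspace, and f : X̃ → X a path-connected covering map such that Ã = f⁻¹(A) is path-connected and the inclusion-induced map π₁(Ã) → π₁(X̃) is an isomorphism. Then the inclusion-induced map π₁(A) → π₁(X) is an isomorphism. -/

import Mathlib

open CategoryTheory Set unitInterval

attribute [local instance] Path.Homotopic.setoid

section CoveringLifting

variable {E X : Type*} [TopologicalSpace E] [TopologicalSpace X] {f : E → X}

theorem IsCoveringMap.isClopen_range (hf : IsCoveringMap f) : IsClopen (Set.range f) := by
  constructor
  · rw [← isOpen_compl_iff, isOpen_iff_forall_mem_open]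
    intro x hx
    obtain ⟨-, U, hxU, hU, -, H, hH⟩ := hf x
    refine ⟨U, ?_, hU, hxU⟩
    rintro y hy ⟨e, he⟩
    have hI := (H ⟨e, show f e ∈ U by rw [he]; exact hy⟩).2
    exact hx ⟨hI.1, hI.2⟩
  · rw [isOpen_iff_forall_mem_open]
    rintro x ⟨e, rfl⟩
    obtain ⟨-, U, hxU, hU, -, H, hH⟩ := hf (f e)
    refine ⟨U, fun y hy => ⟨H.symm (⟨y, hy⟩, ⟨e, rfl⟩), ?_⟩, hU, hxU⟩
    have := hH (H.symm (⟨y, hy⟩, ⟨e, rfl⟩))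
    simp only [Homeomorph.apply_symm_apply] at this
    exact this.symm

theorem IsCoveringMap.nonempty_fiber (hf : IsCoveringMap f) {α : Type*} [TopologicalSpace α]
    [PreconnectedSpace α] {φ : α → X} (hφ : Continuous φ) {a : α} {e : E} (he : f e = φ a)
    (b : α) : Nonempty (f ⁻¹' {φ b}) := by
  have hc := hf.isClopen_range.preimage hφ
  rcases isClopen_iff.1 hc with h | h
  · have : a ∈ φ ⁻¹' Set.range f := ⟨e, he⟩
    rw [h] at this
    exact this.elim
  · have : b ∈ φ ⁻¹' Set.range f := by rw [h]; trivial
    obtain ⟨e', he'⟩ := this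
    exact ⟨⟨e', he'⟩⟩

/-- Path lifting for covering maps, on a real interval. -/
theorem IsCoveringMap.exists_lift_interval (hf : IsCoveringMap f) {γ : ℝ → X}
    (hγ : Continuous γ) {t₀ t₁ : ℝ} (ht : t₀ ≤ t₁) {e : E} (he : f e = γ t₀) :
    ∃ Γ : ℝ → E, Continuous Γ ∧ Γ t₀ = e ∧ ∀ s ∈ Icc t₀ t₁, f (Γ s) = γ s := by
  set S : Set ℝ := {t | t ∈ Icc t₀ t₁ ∧
    ∃ Γ : ℝ → E, Continuous Γ ∧ Γ t₀ = e ∧ ∀ s ∈ Icc t₀ t, f (Γ s) = γ s} with hS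
  have h0 : t₀ ∈ S := by
    refine ⟨⟨le_refl _, ht⟩, fun _ => e, continuous_const, rfl, ?_⟩
    rintro s ⟨h1, h2⟩
    rw [le_antisymm h2 h1, he]
  have hbdd : BddAbove S := ⟨t₁, fun t htS => htS.1.2⟩
  have hne : S.Nonempty := ⟨t₀, h0⟩
  set T := sSup S with hT
  have hTmem : T ∈ Icc t₀ t₁ := ⟨le_csSup hbdd h0, csSup_le hne fun t htS => htS.1.2⟩
  -- trivialization around γ T
  obtain ⟨U, hUopen, hUmem, triv⟩ :
      ∃ U : Set X, IsOpen U ∧ γ T ∈ U ∧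
        ∃ tr : Bundle.Trivialization (f ⁻¹' {γ T}) f, tr.baseSet = U := by
    haveI := hf.nonempty_fiber hγ he T
    exact ⟨_, (hf (γ T)).toTrivialization.open_baseSet, (hf (γ T)).mem_toTrivialization_baseSet,
      _, rfl⟩
  obtain ⟨tr, htrU⟩ := triv
  obtain ⟨ε, hε, hball⟩ : ∃ ε > 0, ∀ s, |s - T| ≤ ε → γ s ∈ U := by
    have : γ ⁻¹' U ∈ nhds T := (hUopen.preimage hγ).mem_nhds hUmem
    obtain ⟨ε, hε, h⟩ := Metric.mem_nhds_iff.1 this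
    exact ⟨ε / 2, by linarith, fun s hs => h (by
      simp only [Metric.mem_ball, Real.dist_eq]; linarith)⟩
  obtain ⟨t, htS, htlt⟩ : ∃ t ∈ S, T - ε < t := by
    obtain ⟨t, htS, h⟩ := exists_lt_of_lt_csSup hne (by linarith : T - ε < T)
    exact ⟨t, htS, h⟩
  have htT : t ≤ T := le_csSup hbdd htS
  obtain ⟨⟨ht₀t, htt₁⟩, Γ, hΓc, hΓ0, hΓlift⟩ := htS
  set u : ℝ := min (T + ε) t₁ with hu
  have htu : t ≤ u := le_min (by linarith) htt₁
  have hmemU : ∀ s, s ∈ Icc t u → γ s ∈ U := by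
    intro s ⟨h1, h2⟩
    refine hball s (abs_le.2 ⟨by linarith, by linarith [min_le_left (T + ε) t₁]⟩)
  -- glue with trivialization sheet through Γ t
  have hΓtU : f (Γ t) ∈ U := by rw [hΓlift t ⟨ht₀t, le_refl _⟩]; exact hmemU t ⟨le_refl _, htu⟩
  have hΓtsrc : Γ t ∈ tr.source := tr.mem_source.2 (htrU ▸ hΓtU)
  set i₀ := (tr (Γ t)).2 with hi₀
  set c : ℝ → ℝ := fun s => max t (min s u) with hc
  have hcc : Continuous c := continuous_const.max (continuous_id.min continuous_const)
  have hcmem : ∀ s, c s ∈ Icc t u := fun s => ⟨le_max_left _ _,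
    max_le (htu) (min_le_right _ _)⟩
  set g : ℝ → E := fun s => tr.toOpenPartialHomeomorph.symm (γ (c s), i₀) with hg
  have hgtarget : ∀ s, (γ (c s), i₀) ∈ tr.target := fun s =>
    tr.mem_target.2 (htrU ▸ hmemU _ (hcmem s))
  have hgc : Continuous g := by
    refine tr.toOpenPartialHomeomorph.continuousOn_symm.comp_continuous
      ((hγ.comp hcc).prodMk continuous_const) hgtarget
  have hgproj : ∀ s, f (g s) = γ (c s) := fun s => tr.proj_symm_apply (hgtarget s)
  have hgt : g t = Γ t := by
    have h1 : c t = t := by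
      show t ⊔ (t ⊓ u) = t
      rw [min_eq_left htu, max_self]
    have h2 : (γ (c t), i₀) = tr (Γ t) := by
      rw [h1, ← hΓlift t ⟨ht₀t, le_refl _⟩, hi₀]
      exact Prod.ext (tr.coe_fst hΓtsrc).symm rfl
    rw [hg]; simp only [h2]
    exact tr.toOpenPartialHomeomorph.left_inv hΓtsrc
  set Γ' : ℝ → E := fun s => if s ≤ t then Γ s else g s with hΓ'
  have hΓ'c : Continuous Γ' :=
    Continuous.if_le hΓc hgc continuous_id continuous_const (fun s hs => by rw [hs, hgt])
  have hΓ'0 : Γ' t₀ = e := by rw [hΓ']; simp only [if_pos ht₀t, hΓ0]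
  have hΓ'lift : ∀ s ∈ Icc t₀ u, f (Γ' s) = γ s := by
    rintro s ⟨h1, h2⟩
    by_cases hst : s ≤ t
    · rw [hΓ']; simp only [if_pos hst]; exact hΓlift s ⟨h1, hst⟩
    · push_neg at hst
      rw [hΓ']; simp only [if_neg (not_le.2 hst)]
      rw [hgproj]
      congr 1
      show t ⊔ (s ⊓ u) = s
      rw [min_eq_left h2, max_eq_right hst.le]
  have huS : u ∈ S := ⟨⟨le_trans ht₀t htu, min_le_right _ _⟩, Γ', hΓ'c, hΓ'0, hΓ'lift⟩
  have huT : u ≤ T := le_csSup hbdd huS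
  have hTt₁ : T = t₁ := by
    rcases lt_or_ge T t₁ with h | h
    · exfalso
      have : T < u := lt_min (by linarith) h
      linarith
    · exact le_antisymm hTmem.2 h
  have : u = t₁ := le_antisymm (min_le_right _ _) (le_min (by linarith) le_rfl)
  obtain ⟨-, Γ'', h1, h2, h3⟩ := huS
  exact ⟨Γ'', h1, h2, fun s hs => h3 s (by rw [this]; exact hs)⟩

/-- clamping to [0,1] -/
noncomputable def cl (s : ℝ) : ℝ := max 0 (min s 1)

theorem cl_continuous : Continuous cl :=
  continuous_const.max (continuous_id.min continuous_const)

theorem cl_mem (s : ℝ) : cl s ∈ Icc (0:ℝ) 1 :=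
  ⟨le_max_left _ _, max_le zero_le_one (min_le_right _ _)⟩

theorem cl_eq_self {s : ℝ} (hs : s ∈ Icc (0:ℝ) 1) : cl s = s := by
  rw [cl, min_eq_left hs.2, max_eq_right hs.1]

theorem cl_cl (s : ℝ) : cl (cl s) = cl s := cl_eq_self (cl_mem s)

/-- Square (homotopy) lifting for covering maps. -/
theorem IsCoveringMap.exists_square_lift (hf : IsCoveringMap f) {H : ℝ × ℝ → X}
    (hH : Continuous H) (hHc : ∀ s r, H (s, r) = H (cl s, r))
    {g : ℝ → E} (hg : Continuous g) (hgcl : ∀ s, g s = g (cl s))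
    (hfg : ∀ s, f (g s) = H (s, 0)) :
    ∃ K : ℝ × ℝ → E, Continuous K ∧ (∀ s, K (s, 0) = g s) ∧
      (∀ s r, K (s, r) = K (cl s, r)) ∧
      ∀ s, ∀ r ∈ Icc (0:ℝ) 1, f (K (s, r)) = H (s, r) := by
  set S : Set ℝ := {t | t ∈ Icc (0:ℝ) 1 ∧ ∃ K : ℝ × ℝ → E, Continuous K ∧
      (∀ s, K (s, 0) = g s) ∧ (∀ s r, K (s, r) = K (cl s, r)) ∧
      ∀ s, ∀ r ∈ Icc (0:ℝ) t, f (K (s, r)) = H (s, r)} with hS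
  have h0 : (0:ℝ) ∈ S := by
    refine ⟨⟨le_refl _, zero_le_one⟩, fun p => g p.1, hg.comp continuous_fst, fun s => rfl,
      fun s r => hgcl s, ?_⟩
    rintro s r ⟨h1, h2⟩
    rw [le_antisymm h2 h1]
    exact hfg s
  have hbdd : BddAbove S := ⟨1, fun t htS => htS.1.2⟩
  have hne : S.Nonempty := ⟨0, h0⟩
  set T := sSup S with hT
  have hTmem : T ∈ Icc (0:ℝ) 1 := ⟨le_csSup hbdd h0, csSup_le hne fun t htS => htS.1.2⟩
  -- canonical trivializations
  have hfib : ∀ p : ℝ × ℝ, Nonempty (f ⁻¹' {H p}) := hf.nonempty_fiber hH (hfg 0)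
  set tr : ∀ p : ℝ × ℝ, Bundle.Trivialization (f ⁻¹' {H p}) f := fun p =>
    (hf (H p)).toTrivialization with htr
  have htrmem : ∀ p : ℝ × ℝ, H p ∈ (tr p).baseSet := fun p => (hf (H p)).mem_toTrivialization_baseSet
  -- choose box sizes
  have hδ : ∀ sg : ℝ, ∃ δ > 0, ∀ p : ℝ × ℝ, |p.1 - sg| < δ → |p.2 - T| < δ →
      H p ∈ (tr (sg, T)).baseSet := by
    intro sg
    have : H ⁻¹' (tr (sg, T)).baseSet ∈ nhds (sg, T) :=
      ((tr (sg, T)).open_baseSet.preimage hH).mem_nhds (htrmem _)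
    obtain ⟨δ, hδpos, hsub⟩ := Metric.mem_nhds_iff.1 this
    refine ⟨δ, hδpos, fun p h1 h2 => hsub ?_⟩
    rw [Metric.mem_ball, Prod.dist_eq]
    simp only [Real.dist_eq]
    exact max_lt h1 h2
  choose δ hδpos hδbox using hδ
  -- finite subcover of [0,1]
  obtain ⟨Fin, hFin⟩ : ∃ Fin : Finset ℝ, Icc (0:ℝ) 1 ⊆ ⋃ i ∈ Fin, Metric.ball i (δ i / 2) := by
    obtain ⟨ss, hss⟩ := isCompact_Icc.elim_finite_subcover
      (fun i : ℝ => Metric.ball i (δ i / 2)) (fun i => Metric.isOpen_ball)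
      (fun sg hsg => mem_iUnion.2 ⟨sg, Metric.mem_ball_self (by linarith [hδpos sg])⟩)
    exact ⟨ss, hss⟩
  have hFinne : Fin.Nonempty := by
    by_contra h
    rw [Finset.not_nonempty_iff_eq_empty] at h
    have := hFin ⟨le_refl (0:ℝ), zero_le_one⟩
    simp [h] at this
  set ε : ℝ := Fin.inf' hFinne (fun i => δ i / 2) with hε
  have hεpos : 0 < ε := by
    rw [hε, Finset.lt_inf'_iff]
    exact fun i _ => by linarith [hδpos i]
  have hcover : ∀ sg ∈ Icc (0:ℝ) 1, ∃ i ∈ Fin, |sg - i| < δ i / 2 := by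
    intro sg hsg
    obtain ⟨i, hi⟩ := mem_iUnion.1 (hFin hsg)
    obtain ⟨hiF, hsgi⟩ := mem_iUnion.1 hi
    exact ⟨i, hiF, by rwa [Metric.mem_ball, Real.dist_eq] at hsgi⟩
  have hεle : ∀ i ∈ Fin, ε ≤ δ i / 2 := fun i hi => Finset.inf'_le _ hi
  -- the member of S close to T
  obtain ⟨t', ht'S, ht'lt⟩ : ∃ t' ∈ S, T - ε < t' := by
    obtain ⟨t', ht'S, h⟩ := exists_lt_of_lt_csSup hne (by linarith : T - ε < T)
    exact ⟨t', ht'S, h⟩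
  have ht'T : t' ≤ T := le_csSup hbdd ht'S
  obtain ⟨⟨ht'0, ht'1⟩, K, hKc, hK0, hKcl, hKlift⟩ := ht'S
  set u : ℝ := min (T + ε) 1 with hu
  have ht'u : t' ≤ u := le_min (by linarith) ht'1
  have hdist : ∀ r ∈ Icc t' u, |r - T| ≤ ε := by
    rintro r ⟨h1, h2⟩
    have := min_le_left (T + ε) 1
    exact abs_le.2 ⟨by linarith, by linarith⟩
  -- basepoints H(s, r) lie in the trivialization at the covering index
  have hbase : ∀ s : ℝ, ∀ i ∈ Fin, |cl s - i| < δ i / 2 → ∀ r ∈ Icc t' u,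
      H (s, r) ∈ (tr (i, T)).baseSet := by
    intro s i hi hcl r hr
    rw [hHc s r]
    refine hδbox i (cl s, r) (lt_of_lt_of_le hcl (by linarith [hδpos i])) ?_
    have h1 := hdist r hr
    have h2 := hεle i hi
    have h3 := hδpos i
    exact lt_of_le_of_lt (h1.trans h2) (by linarith)
  -- column lifts starting at height t'
  have hKbase : ∀ sg : ℝ, f (K (sg, t')) = H (sg, t') :=
    fun sg => hKlift sg t' ⟨ht'0, le_refl _⟩
  have hcol : ∀ sg : ℝ, ∃ Λ : ℝ → E, Continuous Λ ∧ Λ t' = K (sg, t') ∧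
      ∀ r ∈ Icc t' u, f (Λ r) = H (sg, r) := by
    intro sg
    exact hf.exists_lift_interval (hH.comp (Continuous.prodMk_right sg)) ht'u (hKbase sg)
  choose Λ hΛc hΛ0 hΛlift using hcol
  set m : ℝ → ℝ := fun r => max t' (min r u) with hm
  have hmc : Continuous m := continuous_const.max (continuous_id.min continuous_const)
  have hmmem : ∀ r, m r ∈ Icc t' u := fun r => ⟨le_max_left _ _, max_le ht'u (min_le_right _ _)⟩
  have hmid : ∀ r ∈ Icc t' u, m r = r := by
    rintro r ⟨h1, h2⟩
    rw [hm]; show t' ⊔ (r ⊓ u) = r; rw [min_eq_left h2, max_eq_right h1]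
  set L : ℝ × ℝ → E := fun p => Λ (cl p.1) (m p.2) with hL
  -- L agrees locally with explicit trivialization formulas, hence is continuous
  have hLcont : Continuous L := by
    rw [continuous_iff_continuousAt]
    intro p
    obtain ⟨i, hiF, hicl⟩ := hcover (cl p.1) (cl_mem p.1)
    set W : Set (ℝ × ℝ) := {q | |cl q.1 - i| < δ i / 2} with hW
    have hWopen : IsOpen W := by
      have : Continuous fun q : ℝ × ℝ => |cl q.1 - i| :=
        ((cl_continuous.comp continuous_fst).sub continuous_const).abs
      exact isOpen_lt this continuous_const
    have hpW : p ∈ W := hicl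
    set tri := tr (i, T) with htri
    set F : ℝ × ℝ → E := fun q =>
      tri.toOpenPartialHomeomorph.symm (H (cl q.1, m q.2), (tri (K (cl q.1, t'))).2) with hF
    -- key : L = F on W
    have hLF : ∀ q ∈ W, L q = F q := by
      intro q hq
      set sg := cl q.1 with hsg
      have hbase' : ∀ r ∈ Icc t' u, H (sg, r) ∈ tri.baseSet := fun r hr =>
        hbase (cl q.1) i hiF (by rwa [cl_cl]) r hr
      have hKsrc : K (sg, t') ∈ tri.source := by
        rw [tri.mem_source, hKbase sg]
        exact hbase' t' ⟨le_refl _, ht'u⟩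
      have heq : EqOn (fun r => Λ sg r)
          (fun r => tri.toOpenPartialHomeomorph.symm (H (sg, r), (tri (K (sg, t'))).2))
          (Icc t' u) := by
        have htgt : ∀ r ∈ Icc t' u, (H (sg, r), (tri (K (sg, t'))).2) ∈ tri.target :=
          fun r hr => tri.mem_target.2 (hbase' r hr)
        refine hf.eqOn_of_comp_eqOn isPreconnected_Icc ((hΛc sg).continuousOn) ?_ ?_
          (⟨le_refl t', ht'u⟩ : t' ∈ Icc t' u) ?_
        · refine ContinuousOn.comp tri.toOpenPartialHomeomorph.continuousOn_symm ?_ ?_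
          · exact (((hH.comp (Continuous.prodMk_right sg)).prodMk continuous_const)).continuousOn
          · exact fun r hr => htgt r hr
        · intro r hr
          show f (Λ sg r) = f (tri.toOpenPartialHomeomorph.symm _)
          rw [hΛlift sg r hr, tri.proj_symm_apply (htgt r hr)]
        · show Λ sg t' = _
          rw [hΛ0 sg]
          have : (H (sg, t'), (tri (K (sg, t'))).2) = tri (K (sg, t')) := by
            rw [← hKbase sg]
            exact Prod.ext (tri.coe_fst hKsrc).symm rfl
          rw [this]
          exact (tri.toOpenPartialHomeomorph.left_inv hKsrc).symm
      exact heq (hmmem q.2)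
    -- F is continuous at p
    have hFc : ContinuousAt F p := by
      have hbase' : ∀ r ∈ Icc t' u, H (cl p.1, r) ∈ tri.baseSet := fun r hr =>
        hbase (cl p.1) i hiF (by rwa [cl_cl]) r hr
      have hKsrc : K (cl p.1, t') ∈ tri.source := by
        rw [tri.mem_source, hKbase]
        exact hbase' t' ⟨le_refl _, ht'u⟩
      have h1 : ContinuousAt (fun q : ℝ × ℝ => K (cl q.1, t')) p :=
        (hKc.comp ((cl_continuous.comp continuous_fst).prodMk continuous_const)).continuousAt
    -- continuity of tri at the value
      have h2' : ContinuousAt (fun q : ℝ × ℝ => tri (K (cl q.1, t'))) p :=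
        ContinuousAt.comp
          (tri.toOpenPartialHomeomorph.continuousOn.continuousAt
            (tri.open_source.mem_nhds hKsrc)) h1
      have h2 : ContinuousAt (fun q : ℝ × ℝ => (tri (K (cl q.1, t'))).2) p :=
        (continuous_snd.continuousAt).comp h2'
      have h3 : ContinuousAt (fun q : ℝ × ℝ => (H (cl q.1, m q.2), (tri (K (cl q.1, t'))).2)) p :=
        ContinuousAt.prodMk
          ((hH.comp ((cl_continuous.comp continuous_fst).prodMk
            (hmc.comp continuous_snd))).continuousAt) h2
      have hval : (H (cl p.1, m p.2), (tri (K (cl p.1, t'))).2) ∈ tri.target :=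
        tri.mem_target.2 (hbase' (m p.2) (hmmem p.2))
      exact ContinuousAt.comp
        (tri.toOpenPartialHomeomorph.continuousOn_symm.continuousAt
          (tri.open_target.mem_nhds hval)) h3
    refine hFc.congr ?_
    refine Filter.eventuallyEq_of_mem (hWopen.mem_nhds hpW) ?_
    intro q hq
    exact (hLF q hq).symm
  -- glue
  have hmatch : ∀ s : ℝ, L (s, t') = K (s, t') := by
    intro s
    show Λ (cl s) (m t') = K (s, t')
    rw [hmid t' ⟨le_refl _, ht'u⟩, hΛ0, ← hKcl]
  set K' : ℝ × ℝ → E := fun p => if p.2 ≤ t' then K p else L p with hK'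
  have hK'c : Continuous K' := by
    refine Continuous.if_le hKc hLcont continuous_snd continuous_const ?_
    intro p hp
    have : p = (p.1, t') := by rw [← hp]
    rw [this, hmatch p.1]
  have hK'0 : ∀ s, K' (s, 0) = g s := by
    intro s
    rw [hK']
    simp only [if_pos ht'0]
    exact hK0 s
  have hK'cl : ∀ s r, K' (s, r) = K' (cl s, r) := by
    intro s r
    rw [hK']
    by_cases h : r ≤ t'
    · simp only [if_pos h]; exact hKcl s r
    · simp only [if_neg h]
      show Λ (cl s) (m r) = Λ (cl (cl s)) (m r)
      rw [cl_cl]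
  have hK'lift : ∀ s, ∀ r ∈ Icc (0:ℝ) u, f (K' (s, r)) = H (s, r) := by
    rintro s r ⟨h1, h2⟩
    by_cases h : r ≤ t'
    · rw [hK']; simp only [if_pos h]; exact hKlift s r ⟨h1, h⟩
    · push_neg at h
      rw [hK']; simp only [if_neg (not_le.2 h)]
      show f (Λ (cl s) (m r)) = H (s, r)
      rw [hmid r ⟨h.le, h2⟩, hΛlift (cl s) r ⟨h.le, h2⟩, ← hHc]
  have huS : u ∈ S := ⟨⟨le_trans ht'0 ht'u, min_le_right _ _⟩, K', hK'c, hK'0, hK'cl, hK'lift⟩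
  have huT : u ≤ T := le_csSup hbdd huS
  have hT1 : T = 1 := by
    rcases lt_or_ge T 1 with h | h
    · exfalso
      have : T < u := lt_min (by linarith) h
      linarith
    · exact le_antisymm hTmem.2 h
  have hu1 : u = 1 := le_antisymm (min_le_right _ _) (le_min (by linarith) le_rfl)
  obtain ⟨-, K'', h1, h2, h3, h4⟩ := huS
  exact ⟨K'', h1, h2, h3, fun s r hr => h4 s r (by rw [hu1]; exact hr)⟩

/-- Packaged path lifting. -/
theorem IsCoveringMap.exists_path_lift (hf : IsCoveringMap f) {x y : X} (γ : Path x y) (e : E)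
    (he : f e = x) : ∃ (e' : E) (Γ : Path e e'), (∀ t, f (Γ t) = γ t) ∧ f e' = y := by
  obtain ⟨Γ', hc, h0, hlift⟩ := hf.exists_lift_interval γ.continuous_extend
    (zero_le_one) (by rw [Path.extend_zero]; exact he)
  have hlift' : ∀ t : I, f (Γ' ↑t) = γ t := fun t => by
    rw [hlift ↑t t.2, γ.extend_extends']
  refine ⟨Γ' 1, ⟨⟨fun t => Γ' ↑t, hc.comp continuous_subtype_val⟩, ?_, rfl⟩, hlift', ?_⟩
  · show Γ' ↑(0:I) = e
    rw [Icc.coe_zero, h0]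
  · rw [show f (Γ' 1) = f (Γ' ↑(1:I)) by rw [Icc.coe_one], hlift' 1, γ.target]

/-- Uniqueness of path lifts. -/
theorem IsCoveringMap.path_lift_unique (hf : IsCoveringMap f) {g₁ g₂ : I → E}
    (h₁ : Continuous g₁) (h₂ : Continuous g₂) (h : ∀ t, f (g₁ t) = f (g₂ t))
    (h0 : g₁ 0 = g₂ 0) : ∀ t, g₁ t = g₂ t := by
  have := hf.eq_of_comp_eq h₁ h₂ (funext h) 0 h0
  exact fun t => congrFun this t

/-- Monodromy: lifts of homotopic paths starting at the same point are homotopic and end at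
the same point. -/
theorem IsCoveringMap.monodromy' (hf : IsCoveringMap f) {x y : X} {γ₀ γ₁ : Path x y}
    (h : γ₀.Homotopic γ₁) {e a : E} (Γ₀ : Path e a) (hΓ₀ : ∀ t, f (Γ₀ t) = γ₀ t) :
    ∃ Γ₁ : Path e a, (∀ t, f (Γ₁ t) = γ₁ t) ∧ Γ₀.Homotopic Γ₁ := by
  obtain ⟨H⟩ := h
  set ι : ℝ → I := fun s => ⟨cl s, cl_mem s⟩ with hι
  have hιc : Continuous ι := cl_continuous.subtype_mk _
  have hι01 : ∀ t : I, ι ↑t = t := fun t => Subtype.ext (cl_eq_self t.2)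
  set HR : ℝ × ℝ → X := fun p => H (ι p.1, ι p.2) with hHR
  have hHRc : Continuous HR := H.continuous.comp ((hιc.comp continuous_fst).prodMk
    (hιc.comp continuous_snd))
  have hHRcl : ∀ s r, HR (s, r) = HR (cl s, r) := by
    intro s r
    show H (ι s, ι r) = H (ι (cl s), ι r)
    congr 2
    exact Subtype.ext (cl_cl s).symm
  have hbot : ∀ s, HR (s, 0) = x := by
    intro s
    show H (ι s, ι 0) = x
    have : ι 0 = 0 := Subtype.ext (cl_eq_self ⟨le_refl _, zero_le_one⟩)
    rw [this]
    exact H.source (ι s)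
  have he : f e = x := by rw [← γ₀.source, ← hΓ₀ 0, Γ₀.source]
  obtain ⟨K, hKc, hK0, hKcl, hKlift⟩ := hf.exists_square_lift hHRc hHRcl
    (continuous_const : Continuous fun _ : ℝ => e) (fun s => rfl)
    (fun s => by rw [hbot]; exact he)
  set K' : I × I → E := fun q => K (↑q.1, ↑q.2) with hK'
  have hK'c : Continuous K' := hKc.comp ((continuous_subtype_val.comp continuous_fst).prodMk
    (continuous_subtype_val.comp continuous_snd))
  have hK'lift : ∀ s t : I, f (K' (s, t)) = H (s, t) := by
    intro s t
    show f (K (↑s, ↑t)) = H (s, t)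
    rw [hKlift ↑s ↑t t.2]
    show H (ι ↑s, ι ↑t) = H (s, t)
    rw [hι01, hι01]
  have hK'bot : ∀ s : I, K' (s, 0) = e := by
    intro s
    show K (↑s, ↑(0:I)) = e
    rw [Icc.coe_zero, hK0]
  -- the left column is Γ₀
  have hleft : ∀ t : I, K' (0, t) = Γ₀ t := by
    refine hf.path_lift_unique (hK'c.comp (Continuous.prodMk_right 0)) Γ₀.continuous ?_ ?_
    · intro t
      rw [hK'lift 0 t, hΓ₀ t, H.apply_zero]
      rfl
    · rw [hK'bot 0, Γ₀.source]
  -- the top row is constant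
  have htop : ∀ s : I, K' (s, 1) = a := by
    have hconst : ∀ s s' : I, K' (s, 1) = K' (s', 1) := by
      refine hf.const_of_comp (hK'c.comp (continuous_id.prodMk continuous_const)) ?_
      intro s s'
      rw [hK'lift s 1, hK'lift s' 1, H.target, H.target]
    intro s
    rw [hconst s 0, hleft 1, Γ₀.target]
  set Γ₁ : Path e a := ⟨⟨fun t => K' (1, t), hK'c.comp (Continuous.prodMk_right 1)⟩,
    hK'bot 1, htop 1⟩ with hΓ₁
  refine ⟨Γ₁, ?_, ?_⟩
  · intro t
    show f (K' (1, t)) = γ₁ t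
    rw [hK'lift 1 t, H.apply_one]
    rfl
  · refine ⟨⟨⟨⟨fun q => K' q, hK'c⟩, ?_, ?_⟩, ?_⟩⟩
    · intro t
      show K' (0, t) = Γ₀ t
      exact hleft t
    · intro t
      rfl
    · intro s t ht
      rcases ht with h | h
      · have : t = 0 := h
        subst this
        show K' (s, 0) = Γ₀ 0
        rw [hK'bot s, Γ₀.source]
      · have : t = 1 := h
        subst this
        show K' (s, 1) = Γ₀ 1
        rw [htop s, Γ₀.target]

end CoveringLifting

/-- `(p ⬝ q) ⬝ r⁻¹` is homotopic to `g` when `p, g` and `r, q` have the same functions. -/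
theorem trans_trans_symm_homotopic {Y : Type*} [TopologicalSpace Y] {a b : Y} (hab : b = a)
    (P : Path a b) (Q : Path b a) (G : Path a a) (R : Path a a)
    (hPG : ∀ t, P t = G t) (hRQ : ∀ t, R t = Q t) :
    ((P.trans Q).trans R.symm).Homotopic G := by
  subst hab
  have hP : P = G := Path.ext (funext hPG)
  have hR : R = Q := Path.ext (funext hRQ)
  subst hP
  subst hR
  have k1 : ((P.trans R).trans R.symm).Homotopic (P.trans (R.trans R.symm)) :=
    ⟨Path.Homotopy.transAssoc P R R.symm⟩
  have k2 : (R.trans R.symm).Homotopic (Path.refl b) :=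
    Path.Homotopic.symm ⟨Path.Homotopy.reflTransSymm R⟩
  have k3 : (P.trans (R.trans R.symm)).Homotopic (P.trans (Path.refl b)) :=
    Path.Homotopic.hcomp (Path.Homotopic.refl P) k2
  have k4 : (P.trans (Path.refl b)).Homotopic P := ⟨Path.Homotopy.transRefl P⟩
  exact (k1.trans k3).trans k4

/-- The homomorphism on fundamental groups induced by a continuous map. -/
noncomputable def π₁ind {X Y : Type} [TopologicalSpace X] [TopologicalSpace Y]
    (f : C(X, Y)) (x : X) : Aut (FundamentalGroupoid.mk x) →* Aut (FundamentalGroupoid.mk (f x)) :=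
  Functor.mapAut (FundamentalGroupoid.mk x)
    (FundamentalGroupoid.fundamentalGroupoidFunctor.map (X := TopCat.of X) (Y := TopCat.of Y) (TopCat.ofHom f))

theorem Path.Homotopic.map_lift {X Y : Type*} [TopologicalSpace X] [TopologicalSpace Y]
    {x₀ x₁ : X} (P₀ : Path x₀ x₁) (f : C(X, Y)) :
    (⟦P₀.map f.continuous⟧ : Path.Homotopic.Quotient (f x₀) (f x₁)) =
      Path.Homotopic.Quotient.map ⟦P₀⟧ f := rfl

/-- An element of the fundamental group from a loop. -/
noncomputable def fgMk {Z : Type} [TopologicalSpace Z] {z : Z} (p : Path z z) :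
    Aut (FundamentalGroupoid.mk z) where
  hom := (⟦p⟧ : Path.Homotopic.Quotient z z)
  inv := Groupoid.inv (⟦p⟧ : Path.Homotopic.Quotient z z)
  hom_inv_id := Groupoid.comp_inv _
  inv_hom_id := Groupoid.inv_comp _

theorem fgMk_hom {Z : Type} [TopologicalSpace Z] {z : Z} (p : Path z z) :
    (fgMk p).hom = (⟦p⟧ : Path.Homotopic.Quotient z z) := rfl

theorem π₁ind_hom {X Y : Type} [TopologicalSpace X] [TopologicalSpace Y]
    (g : C(X, Y)) (x : X) (α : Aut (FundamentalGroupoid.mk x)) :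
    (π₁ind g x α).hom = Path.Homotopic.Quotient.map
      (show Path.Homotopic.Quotient x x from α.hom) g := rfl

theorem one_hom {Z : Type} [TopologicalSpace Z] (z : Z) :
    ((1 : Aut (FundamentalGroupoid.mk z))).hom = 𝟙 (FundamentalGroupoid.mk z) := rfl

/-- Statement: X path-connected, A ⊆ X path-connected, f : X̃ → X a covering with X̃
path-connected, Ã = f⁻¹(A) path-connected, basepoints chosen compatibly, and the
inclusion Ã ↪ X̃ inducing an isomorphism on fundamental groups.  Then the inclusion
A ↪ X induces the stated property on fundamental groups. -/
theorem stmt_2 {X Xt : Type} [TopologicalSpace X] [TopologicalSpace Xt]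
    [PathConnectedSpace X] [PathConnectedSpace Xt]
    (f : Xt → X) (hf : IsCoveringMap f)
    (A : Set X) (hA : IsPathConnected A) (hAt : IsPathConnected (f ⁻¹' A))
    (a₀ : A) (b₀ : (f ⁻¹' A : Set Xt)) (hbase : f ↑b₀ = ↑a₀)
    (hiso : Function.Bijective
      (π₁ind (⟨Subtype.val, continuous_subtype_val⟩ : C((f ⁻¹' A : Set Xt), Xt)) b₀)) :
    Function.Bijective (π₁ind (⟨Subtype.val, continuous_subtype_val⟩ : C(A, X)) a₀) := by
  obtain ⟨a₀, ha₀⟩ := a₀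
  have hbase' : f ↑b₀ = a₀ := hbase
  clear hbase
  subst hbase'
  set jC : C(A, X) := ⟨Subtype.val, continuous_subtype_val⟩ with hjC
  set iC : C((f ⁻¹' A : Set Xt), Xt) := ⟨Subtype.val, continuous_subtype_val⟩ with hiC
  set ftC : C((f ⁻¹' A : Set Xt), A) :=
    ⟨fun p => ⟨f ↑p, p.2⟩, ((hf.continuous.comp continuous_subtype_val).subtype_mk _)⟩ with hftC
  set fc : C(Xt, X) := ⟨f, hf.continuous⟩ with hfc
  set a₀ : A := ⟨f ↑b₀, ha₀⟩ with ha₀def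
  constructor
  · -- injectivity
    rw [injective_iff_map_eq_one]
    intro α hα
    obtain ⟨γ, hγ⟩ := Quotient.exists_rep (show Path.Homotopic.Quotient a₀ a₀ from α.hom)
    have hγ2 : (⟦γ⟧ : Path.Homotopic.Quotient a₀ a₀) = α.hom := hγ
    -- the image loop is nullhomotopic
    have hq' : (⟦γ.map jC.continuous⟧ : Path.Homotopic.Quotient (jC a₀) (jC a₀))
        = ⟦Path.refl (jC a₀)⟧ := by
      rw [Path.Homotopic.map_lift, hγ2]
      rw [← FundamentalGroupoid.id_eq_path_refl]
      rw [← π₁ind_hom jC a₀ α, hα]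
      rfl
    have hq : (γ.map jC.continuous).Homotopic (Path.refl (jC a₀)) := by
      have := Quotient.exact hq'
      exact this
    -- lift γ to the covering space
    obtain ⟨e', Γ, hΓ, hfe'⟩ := hf.exists_path_lift (γ.map jC.continuous) ↑b₀ rfl
    -- by monodromy the lift is a nullhomotopic loop
    obtain ⟨Γ₁, hΓ₁lift, hΓ₁hom⟩ := hf.monodromy' hq Γ hΓ
    have hconst : ∀ t, Γ₁ t = (fun _ : I => (↑b₀ : Xt)) t := by
      refine hf.path_lift_unique (g₂ := fun _ : I => (↑b₀ : Xt)) Γ₁.continuous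
        continuous_const ?_ Γ₁.source
      intro t
      rw [hΓ₁lift t]
      rfl
    have he' : e' = ↑b₀ := Γ₁.target.symm.trans (hconst 1)
    subst he'
    have hΓ₁eq : Γ₁ = Path.refl (↑b₀ : Xt) := by
      ext t
      exact hconst t
    have hΓrefl : Γ.Homotopic (Path.refl (↑b₀ : Xt)) := hΓ₁eq ▸ hΓ₁hom
    -- Γ stays in the preimage of A
    have hmem : ∀ t, Γ t ∈ f ⁻¹' A := fun t => by
      rw [Set.mem_preimage, hΓ t]
      exact (γ t).2
    set ΓA : Path b₀ b₀ := ⟨⟨fun t => ⟨Γ t, hmem t⟩, Γ.continuous.subtype_mk _⟩,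
      Subtype.ext Γ.source, Subtype.ext Γ.target⟩ with hΓA
    -- its class dies in π₁ of the covering space
    have hαA1 : π₁ind iC b₀ (fgMk ΓA) = 1 := by
      apply Iso.ext
      rw [π₁ind_hom, fgMk_hom, ← Path.Homotopic.map_lift, one_hom]
      have h1 : ΓA.map iC.continuous = Γ := Path.ext (funext fun t => rfl)
      rw [h1, FundamentalGroupoid.id_eq_path_refl]
      exact Quotient.sound hΓrefl
    have hαAtriv : fgMk ΓA = 1 := hiso.1 (by rw [hαA1, map_one])
    have hΓAh' : (⟦ΓA⟧ : Path.Homotopic.Quotient b₀ b₀) = ⟦Path.refl b₀⟧ := by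
      rw [← FundamentalGroupoid.id_eq_path_refl, ← one_hom b₀, ← hαAtriv]
      rfl
    have hΓAh : ΓA.Homotopic (Path.refl b₀) := by
      have := Quotient.exact hΓAh'
      exact this
    -- push down to A
    have hmapped := hΓAh.map ftC
    have h2 : ΓA.map ftC.continuous = γ := by
      refine Path.ext (funext fun t => Subtype.ext ?_)
      exact hΓ t
    have h3 : (Path.refl b₀).map ftC.continuous = Path.refl a₀ := Path.ext (funext fun t => rfl)
    rw [h2, h3] at hmapped
    apply Iso.ext
    show α.hom = 𝟙 (FundamentalGroupoid.mk a₀)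
    rw [← hγ2, FundamentalGroupoid.id_eq_path_refl]
    exact Quotient.sound hmapped
  · -- surjectivity
    intro β
    obtain ⟨γ, hγ⟩ := Quotient.exists_rep
      (show Path.Homotopic.Quotient (jC a₀) (jC a₀) from β.hom)
    have hγ2 : (⟦γ⟧ : Path.Homotopic.Quotient (jC a₀) (jC a₀)) = β.hom := hγ
    obtain ⟨e', Γ, hΓ, hfe'⟩ := hf.exists_path_lift γ ↑b₀ rfl
    have he'mem : e' ∈ f ⁻¹' A := by
      rw [Set.mem_preimage, hfe']
      exact ha₀
    obtain ⟨δ'⟩ : Joined (⟨e', he'mem⟩ : (f ⁻¹' A : Set Xt)) b₀ := by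
      have h := hAt.joinedIn e' he'mem ↑b₀ b₀.2
      exact h.joined_subtype
    set δ : Path e' (↑b₀ : Xt) := δ'.map iC.continuous with hδ
    set ℓ : Path (↑b₀ : Xt) ↑b₀ := Γ.trans δ with hℓ
    obtain ⟨αt, hαt⟩ := hiso.2 (fgMk ℓ)
    obtain ⟨ω, hω⟩ := Quotient.exists_rep (show Path.Homotopic.Quotient b₀ b₀ from αt.hom)
    have hω2 : (⟦ω⟧ : Path.Homotopic.Quotient b₀ b₀) = αt.hom := hω
    have hωℓ' : (⟦ω.map iC.continuous⟧ : Path.Homotopic.Quotient (iC b₀) (iC b₀)) = ⟦ℓ⟧ := by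
      rw [Path.Homotopic.map_lift, hω2, ← π₁ind_hom iC b₀ αt, hαt, fgMk_hom]
    have hωℓ : (ω.map iC.continuous).Homotopic ℓ := by
      have := Quotient.exact hωℓ'
      exact this
    -- build the candidate loop in A
    set ρω : Path a₀ a₀ := ⟨⟨fun t => ⟨f ↑(ω t), (ω t).2⟩,
        ((hf.continuous.comp continuous_subtype_val).comp ω.continuous).subtype_mk _⟩,
      Subtype.ext (congrArg (fun p : (f ⁻¹' A : Set Xt) => f ↑p) ω.source),
      Subtype.ext (congrArg (fun p : (f ⁻¹' A : Set Xt) => f ↑p) ω.target)⟩ with hρω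
    set ρδ : Path a₀ a₀ := ⟨⟨fun t => ⟨f ↑(δ' t), (δ' t).2⟩,
        ((hf.continuous.comp continuous_subtype_val).comp δ'.continuous).subtype_mk _⟩,
      Subtype.ext ((congrArg (fun p : (f ⁻¹' A : Set Xt) => f ↑p) δ'.source).trans hfe'),
      Subtype.ext (congrArg (fun p : (f ⁻¹' A : Set Xt) => f ↑p) δ'.target)⟩ with hρδ
    refine ⟨fgMk (ρω.trans ρδ.symm), ?_⟩
    apply Iso.ext
    rw [π₁ind_hom, fgMk_hom, ← Path.Homotopic.map_lift, ← hγ2]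
    apply Quotient.sound
    -- now: ((ρω.trans ρδ.symm).map jC.continuous).Homotopic γ
    have hsplit : (ρω.trans ρδ.symm).map jC.continuous =
        (ρω.map jC.continuous).trans ((ρδ.map jC.continuous).symm) := by
      rw [Path.map_trans, Path.map_symm]
    rw [hsplit]
    have hE1 : ρω.map jC.continuous = (ω.map iC.continuous).map fc.continuous :=
      Path.ext (funext fun t => rfl)
    rw [hE1]
    have h2 : ((ω.map iC.continuous).map fc.continuous).Homotopic
        ((Γ.map fc.continuous).trans (δ.map fc.continuous)) := by
      have h := hωℓ.map fc
      rwa [hℓ, Path.map_trans] at h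
    have monster : (((Γ.map fc.continuous).trans (δ.map fc.continuous)).trans
        ((ρδ.map jC.continuous).symm)).Homotopic γ := by
      refine trans_trans_symm_homotopic hfe' (Γ.map fc.continuous) (δ.map fc.continuous) γ
        (ρδ.map jC.continuous) ?_ ?_
      · exact hΓ
      · intro t
        rfl
    exact (Path.Homotopic.hcomp h2 (Path.Homotopic.refl _)).trans monster
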